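/- Let α > 1, let K ≥ 1, and let t_1 ≥ αt_2 ≥ α²t_3 ≥ … ≥ α^{K-1}t_K > 0 (i.e. t_j ≥ α·t_{j+1} > 0 for all j). Then for every 1 ≤ i ≤ K, (Σ_{j=1}^{i} t_j)² / (Σ_{j=1}^{i} t_j²) ≤ ((α^i - 1)(α + 1))/((α^i + 1)(α - 1)). -/

import Mathlib

private lemma key_step (a b S Q t : ℝ) (hb : 1 < b) (hab : b ≤ a) (ht : 0 < t)
    (h1 : (a+1)*(b-1)*S^2 ≤ (a-1)*(b+1)*Q)
    (h2 : b*(a-1)*t ≤ (b-1)*S) :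
    (a*b+1)*(b-1)*(S+t)^2 ≤ (a*b-1)*(b+1)*(Q+t^2) := by
  have ha1 : (0:ℝ) < a - 1 := by linarith
  have hu : 0 ≤ (b-1)*S - b*(a-1)*t := by linarith
  have habe : (0:ℝ) ≤ a*b - 1 := by nlinarith
  have hv : 0 ≤ a*(b-1)*S - (a-1)*t := by
    nlinarith [mul_le_mul_of_nonneg_left h2 (show (0:ℝ) ≤ a by linarith),
      mul_nonneg (mul_nonneg ha1.le ht.le) habe]
  have h3 : 0 ≤ (a-1) * ((a*b-1)*(b+1)*(Q+t^2) - (a*b+1)*(b-1)*(S+t)^2) := by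
    nlinarith [mul_nonneg hu hv, mul_le_mul_of_nonneg_left h1 habe]
  nlinarith [h3]

theorem decaying_ratio_bound (α : ℝ) (hα : 1 < α) (K : ℕ) (hK : 1 ≤ K) (t : ℕ → ℝ)
    (hpos : 0 < t K) (hchain : ∀ j, 1 ≤ j → j < K → α * t (j + 1) ≤ t j) :
    ∀ i, 1 ≤ i → i ≤ K →
      (∑ j ∈ Finset.Icc 1 i, t j) ^ 2 / (∑ j ∈ Finset.Icc 1 i, (t j) ^ 2) ≤
        ((α ^ i - 1) * (α + 1)) / ((α ^ i + 1) * (α - 1)) := by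
  have hα0 : (0:ℝ) < α := by linarith
  -- positivity of all t j for 1 ≤ j ≤ K
  have tposd : ∀ d j, 1 ≤ j → j + d = K → 0 < t j := by
    intro d
    induction d with
    | zero =>
      intro j h1 h2
      have hj : j = K := by omega
      exact hj ▸ hpos
    | succ d ih =>
      intro j h1 h2
      have hlt : j < K := by omega
      have h3 := hchain j h1 hlt
      have h4 : 0 < t (j+1) := ih (j+1) (by omega) (by omega)
      nlinarith
  have tpos : ∀ j, 1 ≤ j → j ≤ K → 0 < t j := by
    intro j h1 h2; exact tposd (K - j) j h1 (by omega)
  -- main induction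
  have main : ∀ i, 1 ≤ i → i ≤ K →
      (α ^ i - 1) * t i ≤ (α - 1) * (∑ j ∈ Finset.Icc 1 i, t j) ∧
      ((α ^ i + 1) * (α - 1)) * (∑ j ∈ Finset.Icc 1 i, t j) ^ 2 ≤
        ((α ^ i - 1) * (α + 1)) * (∑ j ∈ Finset.Icc 1 i, (t j) ^ 2) := by
    intro i hi1
    induction i, hi1 using Nat.le_induction with
    | base =>
      intro _
      simp only [Finset.Icc_self, Finset.sum_singleton, pow_one]
      constructor
      · linarith
      · nlinarith
    | succ i hi ih =>
      intro hiK
      have hiK' : i ≤ K := by omega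
      have ⟨ih1, ih2⟩ := ih hiK'
      have hsum : ∀ f : ℕ → ℝ, (∑ j ∈ Finset.Icc 1 (i+1), f j) = (∑ j ∈ Finset.Icc 1 i, f j) + f (i+1) := by
        intro f; exact Finset.sum_Icc_succ_top (by omega) f
      rw [hsum, hsum, pow_succ]
      set S := ∑ j ∈ Finset.Icc 1 i, t j with hS
      set Q := ∑ j ∈ Finset.Icc 1 i, (t j)^2 with hQ
      set a := α ^ i with ha
      set b := α with hb
      set u := t (i+1) with hu
      have hab : b ≤ a := by
        have := pow_le_pow_right₀ hα.le hi
        simpa [ha, hb] using this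
      have hupos : 0 < u := tpos (i+1) (by omega) hiK
      have hchain' : b * u ≤ t i := hchain i hi (by omega)
      have htipos : 0 < t i := tpos i hi hiK'
      have ha1 : (0:ℝ) ≤ a - 1 := by linarith
      -- lower bound for S against u
      have h2 : b * (a - 1) * u ≤ (b - 1) * S := by
        have e1 : (a - 1) * (b * u) ≤ (a - 1) * t i := by
          exact mul_le_mul_of_nonneg_left hchain' ha1
        nlinarith [ih1]
      constructor
      · -- first part for i+1
        have : (a - 1) * t i ≤ (b - 1) * S := ih1
        nlinarith
      · have := key_step a b S Q u hα hab hupos (by nlinarith [ih2]) h2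
        nlinarith [this]
  -- conclude division form
  intro i h1 h2
  have ⟨_, m2⟩ := main i h1 h2
  have hQpos : 0 < ∑ j ∈ Finset.Icc 1 i, (t j) ^ 2 := by
    apply Finset.sum_pos
    · intro j hj
      simp only [Finset.mem_Icc] at hj
      exact pow_pos (tpos j hj.1 (le_trans hj.2 h2)) 2
    · exact ⟨1, by simp [Finset.mem_Icc]; omega⟩
  have hapos : (0:ℝ) < (α ^ i + 1) * (α - 1) := by
    have : (0:ℝ) < α ^ i := pow_pos hα0 i
    nlinarith
  rw [div_le_div_iff₀ hQpos hapos]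
  nlinarith [m2]
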